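/- Suppose C^∞ ∩ A⁻¹(D^∞) = {0} and that F is a KL function. Let 0 < L_min ≤ L_max < ∞ and c > 0, let x⁰ ∈ C, and let {x^t} ⊆ C be a sequence such that for every t ≥ 0 there exist η^t ∈ Proj_D(Ax^t) and L̄_t ∈ [L_min, L_max] with x^{t+1} ∈ Proj_C(x^t − Aᵀ(Ax^t − η^t)/L̄_t) and d(Ax^{t+1}, D)² ≤ d(Ax^t, D)² − c‖x^{t+1} − x^t‖² (the iterates of SpFeas_DC_ls with M = 0). Then {x^t} is bounded. Moreover, if x* is an accumulation point of {x^t} such that the function y ↦ ½ d(y, D)² is continuously differentiable on a neighborhood of Ax* with locally Lipschitz gradient there, then the whole sequence {x^t} converges. -/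

import Mathlib

open Filter Topology Metric
open scoped RealInnerProductSpace

noncomputable section

/-- The set of projections of `y` onto `S`. -/
def projSet {E : Type*} [NormedAddCommGroup E] (S : Set E) (y : E) : Set E :=
  {z | z ∈ S ∧ dist y z = Metric.infDist y S}

/-- The horizon cone of `S`. -/
def horizonCone {E : Type*} [NormedAddCommGroup E] [NormedSpace ℝ E] (S : Set E) : Set E :=
  {x | ∃ (u : ℕ → E) (β : ℕ → ℝ), (∀ t, u t ∈ S) ∧ (∀ t, 0 < β t) ∧
    Tendsto β atTop (𝓝 (0 : ℝ)) ∧ Tendsto (fun t => β t • u t) atTop (𝓝 x)}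

/-- The regular (Fréchet) normal cone to `S` at `x`. -/
def regNormalCone {E : Type*} [NormedAddCommGroup E] [InnerProductSpace ℝ E]
    (S : Set E) (x : E) : Set E :=
  {v | x ∈ S ∧ ∀ ε > 0, ∃ δ > 0, ∀ u ∈ S, ‖u - x‖ < δ → ⟪v, u - x⟫ ≤ ε * ‖u - x‖}

/-- The limiting normal cone to `S` at `x`. -/
def normalCone {E : Type*} [NormedAddCommGroup E] [InnerProductSpace ℝ E]
    (S : Set E) (x : E) : Set E :=
  {v | x ∈ S ∧ ∃ (xs vs : ℕ → E), (∀ t, vs t ∈ regNormalCone S (xs t)) ∧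
    Tendsto xs atTop (𝓝 x) ∧ Tendsto vs atTop (𝓝 v)}

/-- The regular (Fréchet) subdifferential at `x` of the function `φ + δ_C`
(the real-valued function `φ` plus the indicator of `C`). -/
def regSubdiff {E : Type*} [NormedAddCommGroup E] [InnerProductSpace ℝ E]
    (φ : E → ℝ) (C : Set E) (x : E) : Set E :=
  {v | x ∈ C ∧ ∀ ε > 0, ∃ δ > 0, ∀ u ∈ C, ‖u - x‖ < δ →
      φ u - φ x - ⟪v, u - x⟫ ≥ -(ε * ‖u - x‖)}

/-- The limiting subdifferential at `x` of the function `φ + δ_C`. -/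
def limSubdiff {E : Type*} [NormedAddCommGroup E] [InnerProductSpace ℝ E]
    (φ : E → ℝ) (C : Set E) (x : E) : Set E :=
  {v | x ∈ C ∧ ∃ (xs vs : ℕ → E), (∀ t, vs t ∈ regSubdiff φ C (xs t)) ∧
    Tendsto xs atTop (𝓝 x) ∧ Tendsto (fun t => φ (xs t)) atTop (𝓝 (φ x)) ∧
    Tendsto vs atTop (𝓝 v)}

/-- The smooth part `x ↦ ½ d(Ax, D)²` of the split-feasibility objective
`F = ½ d(A·, D)² + δ_C`. -/
def phiF {n m : ℕ} (A : EuclideanSpace ℝ (Fin n) →L[ℝ] EuclideanSpace ℝ (Fin m))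
    (D : Set (EuclideanSpace ℝ (Fin m))) (x : EuclideanSpace ℝ (Fin n)) : ℝ :=
  Metric.infDist (A x) D ^ 2 / 2

/-- A polyhedral set: an intersection of finitely many closed half-spaces. -/
def IsPolyhedral {E : Type*} [NormedAddCommGroup E] [InnerProductSpace ℝ E] (S : Set E) : Prop :=
  ∃ (k : ℕ) (a : Fin k → E) (b : Fin k → ℝ), S = {x | ∀ i, ⟪a i, x⟫ ≤ b i}

end


noncomputable section AuxLemmas

open Filter Topology Metric
open scoped RealInnerProductSpace

theorem aux_tangent {s : ℝ} {ψ : ℝ → ℝ} {ψ'a a : ℝ}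
    (hcon : ConcaveOn ℝ (Set.Ico 0 s) ψ) (ha : a ∈ Set.Ioo (0:ℝ) s)
    (hd : HasDerivAt ψ ψ'a a) :
    ∀ b ∈ Set.Ico (0:ℝ) s, ψ b ≤ ψ a + ψ'a * (b - a) := by
  intro b hb
  have hslope : Tendsto (slope ψ a) (𝓝[>] a) (𝓝 ψ'a) :=
    (hasDerivAt_iff_tendsto_slope.mp hd).mono_left
      (nhdsWithin_mono _ (fun y hy => ne_of_gt hy))
  have haI : a ∈ Set.Ico (0:ℝ) s := ⟨ha.1.le, ha.2⟩
  have hsec : ∀ u v : ℝ, u ∈ Set.Ico (0:ℝ) s → v ∈ Set.Ico (0:ℝ) s → u ≠ a → v ≠ a → u ≤ v →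
      slope ψ a v ≤ slope ψ a u := by
    intro u v hu hv hua hva huv
    have := hcon.neg.secant_mono haI hu hv hua hva huv
    simp only [Pi.neg_apply] at this
    rw [slope_def_field, slope_def_field]
    have h1 : (-ψ u - -ψ a) / (u - a) = -((ψ u - ψ a)/(u - a)) := by ring
    have h2 : (-ψ v - -ψ a) / (v - a) = -((ψ v - ψ a)/(v - a)) := by ring
    rw [h1, h2] at this
    linarith
  rcases lt_trichotomy b a with hba | hba | hba
  · have hev : ∀ᶠ y in 𝓝[>] a, slope ψ a y ≤ slope ψ a b := by
      filter_upwards [Ioo_mem_nhdsGT_of_mem ⟨le_refl a, ha.2⟩] with y hy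
      exact hsec b y hb ⟨(ha.1.le.trans hy.1.le), hy.2⟩ hba.ne hy.1.ne' (hba.le.trans hy.1.le)
    have hle : ψ'a ≤ slope ψ a b := le_of_tendsto hslope hev
    rw [slope_def_field] at hle
    have hba' : b - a < 0 := by linarith
    rw [le_div_iff_of_neg hba'] at hle
    linarith
  · simp [hba]
  · have hev : ∀ᶠ y in 𝓝[>] a, slope ψ a b ≤ slope ψ a y := by
      filter_upwards [Ioo_mem_nhdsGT_of_mem ⟨le_refl a, hba⟩] with y hy
      exact hsec y b ⟨ha.1.le.trans hy.1.le, hy.2.trans_le hb.2.le⟩ hb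
        hy.1.ne' hba.ne' hy.2.le
    have hle : slope ψ a b ≤ ψ'a := ge_of_tendsto hslope hev
    rw [slope_def_field, div_le_iff₀ (by linarith : (0:ℝ) < b - a)] at hle
    linarith

theorem aux_bounded {n m : ℕ} (A : EuclideanSpace ℝ (Fin n) →L[ℝ] EuclideanSpace ℝ (Fin m))
    (C : Set (EuclideanSpace ℝ (Fin n))) (D : Set (EuclideanSpace ℝ (Fin m)))
    (hDne : D.Nonempty) (hDcl : IsClosed D)
    (hhor : ∀ z, z ∈ horizonCone C → A z ∈ horizonCone D → z = 0) (r : ℝ) :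
    Bornology.IsBounded {x | x ∈ C ∧ Metric.infDist (A x) D ≤ r} := by
  by_contra hub
  rw [isBounded_iff_forall_norm_le] at hub
  push_neg at hub
  have hex : ∀ k : ℕ, ∃ u, (u ∈ C ∧ Metric.infDist (A u) D ≤ r) ∧ (k : ℝ) < ‖u‖ := by
    intro k; obtain ⟨u, hu1, hu2⟩ := hub k; exact ⟨u, hu1, hu2⟩
  choose u hu hnu using hex
  have hupos : ∀ k, 0 < ‖u k‖ := fun k => lt_of_le_of_lt (Nat.cast_nonneg k) (hnu k)
  set β : ℕ → ℝ := fun k => ‖u k‖⁻¹ with hβ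
  have hβpos : ∀ k, 0 < β k := fun k => inv_pos.mpr (hupos k)
  have hnorm_top : Tendsto (fun k => ‖u k‖) atTop atTop :=
    tendsto_atTop_mono (fun k => (hnu k).le) tendsto_natCast_atTop_atTop
  have hβ0 : Tendsto β atTop (𝓝 0) := hnorm_top.inv_tendsto_atTop
  have hmem : ∀ k, β k • u k ∈ Metric.sphere (0 : EuclideanSpace ℝ (Fin n)) 1 := by
    intro k
    simp only [mem_sphere_iff_norm, sub_zero, norm_smul, Real.norm_eq_abs,
      abs_of_pos (hβpos k)]
    field_simp [hβ]
    exact inv_mul_cancel₀ (hupos k).ne'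
  obtain ⟨z, hzs, σ, hσ, hconv⟩ :=
    (isCompact_sphere (0 : EuclideanSpace ℝ (Fin n)) 1).tendsto_subseq hmem
  have hzC : z ∈ horizonCone C :=
    ⟨u ∘ σ, β ∘ σ, fun t => (hu (σ t)).1, fun t => hβpos _,
      hβ0.comp hσ.tendsto_atTop, hconv⟩
  have hη : ∀ k, ∃ η ∈ D, Metric.infDist (A (u k)) D = dist (A (u k)) η :=
    fun k => hDcl.exists_infDist_eq_dist hDne (A (u k))
  choose η hηD hηd using hη
  have hAv : Tendsto (fun k => A (β (σ k) • u (σ k))) atTop (𝓝 (A z)) :=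
    (A.continuous.tendsto z).comp hconv
  have hdiff : Tendsto (fun k => β (σ k) • η (σ k) - A (β (σ k) • u (σ k))) atTop (𝓝 0) := by
    apply squeeze_zero_norm (a := fun k => β (σ k) * r)
    · intro k
      have heq : β (σ k) • η (σ k) - A (β (σ k) • u (σ k)) = β (σ k) • (η (σ k) - A (u (σ k))) := by
        rw [map_smul, smul_sub]
      rw [heq, norm_smul, Real.norm_eq_abs, abs_of_pos (hβpos _)]
      have h1 : ‖η (σ k) - A (u (σ k))‖ ≤ r := by
        have h2 := (hu (σ k)).2
        rw [hηd (σ k), dist_eq_norm] at h2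
        rwa [norm_sub_rev]
      exact mul_le_mul_of_nonneg_left h1 (hβpos _).le
    · have := (hβ0.comp hσ.tendsto_atTop).mul_const r
      simpa using this
  have hAzD : A z ∈ horizonCone D := by
    refine ⟨η ∘ σ, β ∘ σ, fun t => hηD _, fun t => hβpos _, hβ0.comp hσ.tendsto_atTop, ?_⟩
    have heq : (fun k => β (σ k) • η (σ k)) =
        fun k => A (β (σ k) • u (σ k)) + (β (σ k) • η (σ k) - A (β (σ k) • u (σ k))) := by
      funext k; abel
    rw [show (fun t => (β ∘ σ) t • (η ∘ σ) t) = fun k => β (σ k) • η (σ k) from rfl, heq]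
    simpa using hAv.add hdiff
  have hz0 := hhor z hzC hAzD
  rw [hz0] at hzs
  simp at hzs

variable {E : Type*} [NormedAddCommGroup E] [InnerProductSpace ℝ E] [CompleteSpace E]

theorem aux_grad_proj {D : Set E} {y₀ v η : E}
    (hg : HasGradientAt (fun z => Metric.infDist z D ^ 2 / 2) v y₀)
    (hη : η ∈ projSet D y₀) : v = y₀ - η := by
  set f : E → ℝ := fun z => Metric.infDist z D ^ 2 / 2 with hf
  have hupper : ∀ y : E, f y - f y₀ ≤ ⟪y₀ - η, y - y₀⟫ + ‖y - y₀‖^2/2 := by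
    intro y
    have h1 : Metric.infDist y D ≤ ‖y - η‖ := by
      rw [← dist_eq_norm]; exact Metric.infDist_le_dist_of_mem hη.1
    have h2 : f y ≤ ‖y - η‖^2/2 := by
      have := pow_le_pow_left₀ Metric.infDist_nonneg h1 2
      simp only [hf]; linarith
    have h3 : f y₀ = ‖y₀ - η‖^2/2 := by
      simp only [hf]; rw [← hη.2, dist_eq_norm]
    have h4 : ‖y - η‖^2 = ‖y₀ - η‖^2 + 2*⟪y₀ - η, y - y₀⟫ + ‖y - y₀‖^2 := by
      have heq : y - η = (y₀ - η) + (y - y₀) := by abel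
      rw [heq, norm_add_sq_real]
    rw [h3]; rw [h4] at h2; linarith
  by_contra hne
  set w : E := v - (y₀ - η) with hw
  have hwne : w ≠ 0 := sub_ne_zero.mpr hne
  have hwpos : 0 < ‖w‖ := norm_pos_iff.mpr hwne
  have hlo := hasGradientAt_iff_isLittleO.mp hg
  have hev := hlo.def (show (0:ℝ) < ‖w‖/4 by positivity)
  rw [Metric.eventually_nhds_iff] at hev
  obtain ⟨δ, hδ, hball⟩ := hev
  set t : ℝ := min (δ / (2 * (‖w‖ + 1))) (1/2) with ht
  have htpos : 0 < t := by positivity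
  have ht1 : t ≤ 1/2 := min_le_right _ _
  set y : E := y₀ + t • w with hy
  have hyd : dist y y₀ < δ := by
    rw [dist_eq_norm]
    simp only [hy, add_sub_cancel_left, norm_smul, Real.norm_eq_abs, abs_of_pos htpos]
    calc t * ‖w‖ ≤ (δ / (2 * (‖w‖ + 1))) * ‖w‖ :=
          mul_le_mul_of_nonneg_right (min_le_left _ _) (norm_nonneg w)
      _ < δ := by
          rw [div_mul_eq_mul_div, div_lt_iff₀ (by positivity)]
          nlinarith
  have hkey := hball hyd
  have hyy : y - y₀ = t • w := by simp [hy]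
  rw [hyy] at hkey
  have hiv : ⟪v, t • w⟫ = t * ⟪v, w⟫ := real_inner_smul_right v w t
  have hup := hupper y
  rw [hyy] at hup
  have hup2 : f y - f y₀ ≤ t * ⟪y₀ - η, w⟫ + t^2*‖w‖^2/2 := by
    rw [real_inner_smul_right] at hup
    have heq : ‖t • w‖^2 = t^2 * ‖w‖^2 := by
      rw [norm_smul, mul_pow, Real.norm_eq_abs, sq_abs]
    linarith [hup, heq.le]
  have hnorm_tw : ‖t • w‖ = t * ‖w‖ := by
    rw [norm_smul, Real.norm_eq_abs, abs_of_pos htpos]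
  have hlow : t * ⟪v, w⟫ - ‖w‖/4 * (t * ‖w‖) ≤ f y - f y₀ := by
    have h5 : |f y - f y₀ - ⟪v, t • w⟫| ≤ ‖w‖/4 * ‖t • w‖ := by
      rw [← Real.norm_eq_abs]; exact hkey
    have h6 := (abs_le.mp h5).1
    rw [hiv, hnorm_tw] at h6
    linarith
  have hinner : ⟪v, w⟫ - ⟪y₀ - η, w⟫ = ‖w‖^2 := by
    rw [← inner_sub_left]
    have heq : v - (y₀ - η) = w := rfl
    rw [heq, real_inner_self_eq_norm_sq]
  have e0 : ‖w‖/4*(t*‖w‖) = t*‖w‖^2/4 := by ring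
  have e1 : t * ⟪v,w⟫ - t * ⟪y₀-η,w⟫ = t * ‖w‖^2 := by rw [← mul_sub, hinner]
  have e2 : t * ‖w‖^2 ≤ t*‖w‖^2/4 + t^2*‖w‖^2/2 := by nlinarith [hlow, hup2, e1, e0]
  nlinarith [e2, ht1, mul_pos htpos (pow_pos hwpos 2)]

theorem aux_reg_le_lim {φ : E → ℝ} {C : Set E} {z v : E} (h : v ∈ regSubdiff φ C z) :
    v ∈ limSubdiff φ C z :=
  ⟨h.1, fun _ => z, fun _ => v, fun _ => h, tendsto_const_nhds, tendsto_const_nhds,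
    tendsto_const_nhds⟩

theorem aux_reg_mem {C : Set E} {φ : E → ℝ} {z y d : E} {L : ℝ} (hL : 0 < L)
    (hz : z ∈ projSet C y) (hgrad : HasGradientAt φ d z) :
    d + L • (y - z) ∈ regSubdiff φ C z := by
  refine ⟨hz.1, fun ε hε => ?_⟩
  have hlo := hasGradientAt_iff_isLittleO.mp hgrad
  have hev := hlo.def (show (0:ℝ) < ε/2 by positivity)
  rw [Metric.eventually_nhds_iff] at hev
  obtain ⟨δ₁, hδ₁, hball⟩ := hev
  refine ⟨min δ₁ (ε / L), lt_min hδ₁ (by positivity), fun u hu hun => ?_⟩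
  have hun1 : ‖u - z‖ < δ₁ := lt_of_lt_of_le hun (min_le_left _ _)
  have hun2 : ‖u - z‖ < ε / L := lt_of_lt_of_le hun (min_le_right _ _)
  have hprox : ⟪y - z, u - z⟫ ≤ ‖u - z‖^2 / 2 := by
    have h1 : ‖y - z‖ ≤ ‖y - u‖ := by
      rw [← dist_eq_norm, ← dist_eq_norm]
      exact hz.2.trans_le (Metric.infDist_le_dist_of_mem hu)
    have h2 : ‖y - u‖^2 = ‖y - z‖^2 - 2*⟪y - z, u - z⟫ + ‖u - z‖^2 := by
      have heq : y - u = (y - z) - (u - z) := by abel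
      rw [heq, norm_sub_sq_real]
    nlinarith [pow_le_pow_left₀ (norm_nonneg (y - z)) h1 2]
  have hsm : ⟪L • (y - z), u - z⟫ ≤ (ε/2) * ‖u - z‖ := by
    rw [real_inner_smul_left]
    calc L * ⟪y - z, u - z⟫ ≤ L * (‖u - z‖^2/2) :=
          mul_le_mul_of_nonneg_left hprox hL.le
      _ ≤ (ε/2) * ‖u - z‖ := by
          rw [lt_div_iff₀ hL] at hun2
          nlinarith [norm_nonneg (u - z)]
  have hquad : φ u - φ z - ⟪d, u - z⟫ ≥ -((ε/2) * ‖u - z‖) := by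
    have h5 : ‖φ u - φ z - ⟪d, u - z⟫‖ ≤ ε/2 * ‖u - z‖ := by
      apply hball; rw [dist_eq_norm]; exact hun1
    rw [Real.norm_eq_abs] at h5
    linarith [(abs_le.mp h5).1]
  rw [inner_add_left]
  linarith [hsm, hquad]

theorem aux_chain {n m : ℕ} (A : EuclideanSpace ℝ (Fin n) →L[ℝ] EuclideanSpace ℝ (Fin m))
    {f : EuclideanSpace ℝ (Fin m) → ℝ} {v : EuclideanSpace ℝ (Fin m)}
    {z : EuclideanSpace ℝ (Fin n)} (hf : HasGradientAt f v (A z)) :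
    HasGradientAt (fun x => f (A x)) ((ContinuousLinearMap.adjoint A) v) z := by
  rw [hasGradientAt_iff_hasFDerivAt] at hf ⊢
  have hcomp := hf.comp z A.hasFDerivAt
  convert hcomp using 1
  · rfl
  · rfl
  · rfl
  ext w
  simp [InnerProductSpace.toDual_apply_apply, ContinuousLinearMap.adjoint_inner_left]

end AuxLemmas

set_option maxHeartbeats 2000000 in
/-- Global convergence of `SpFeas_DC_ls` with `M = 0`: under the
horizon-cone condition and the KL property of `F = ½ d(A·, D)² + δ_C`, the iterates are
bounded; moreover, if `y ↦ ½ d(y, D)²` is continuously differentiable with locally Lipschitz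
gradient around `A x*` for an accumulation point `x*`, the whole sequence converges. -/
theorem stmt_10 (n m : ℕ)
    (A : EuclideanSpace ℝ (Fin n) →L[ℝ] EuclideanSpace ℝ (Fin m))
    (C : Set (EuclideanSpace ℝ (Fin n))) (D : Set (EuclideanSpace ℝ (Fin m)))
    (hCne : C.Nonempty) (hCcl : IsClosed C) (hDne : D.Nonempty) (hDcl : IsClosed D)
    (hhor : ∀ z, z ∈ horizonCone C → A z ∈ horizonCone D → z = 0)
    (hKL : ∀ xb : EuclideanSpace ℝ (Fin n), (limSubdiff (phiF A D) C xb).Nonempty →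
      ∃ (U : Set (EuclideanSpace ℝ (Fin n))) (s : ℝ) (ψ ψ' : ℝ → ℝ),
        U ∈ 𝓝 xb ∧ 0 < s ∧ ψ 0 = 0 ∧
        ContinuousOn ψ (Set.Ico 0 s) ∧ ConcaveOn ℝ (Set.Ico 0 s) ψ ∧
        (∀ a ∈ Set.Ico (0 : ℝ) s, 0 ≤ ψ a) ∧
        (∀ a ∈ Set.Ioo (0 : ℝ) s, HasDerivAt ψ (ψ' a) a) ∧
        ContinuousOn ψ' (Set.Ioo 0 s) ∧ (∀ a ∈ Set.Ioo (0 : ℝ) s, 0 < ψ' a) ∧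
        (∀ z ∈ U, z ∈ C → phiF A D xb < phiF A D z → phiF A D z < phiF A D xb + s →
          ∀ w ∈ limSubdiff (phiF A D) C z,
            ψ' (phiF A D z - phiF A D xb) * ‖w‖ ≥ 1))
    (Lmin Lmax c : ℝ) (hLmin : 0 < Lmin) (hLmm : Lmin ≤ Lmax) (hc : 0 < c)
    (x : ℕ → EuclideanSpace ℝ (Fin n)) (hxC : ∀ t, x t ∈ C)
    (hstep : ∀ t : ℕ, ∃ η ∈ projSet D (A (x t)), ∃ Lb : ℝ, Lmin ≤ Lb ∧ Lb ≤ Lmax ∧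
      x (t + 1) ∈ projSet C (x t - Lb⁻¹ • ((ContinuousLinearMap.adjoint A) (A (x t) - η))) ∧
      Metric.infDist (A (x (t + 1))) D ^ 2 ≤
        Metric.infDist (A (x t)) D ^ 2 - c * ‖x (t + 1) - x t‖ ^ 2) :
    Bornology.IsBounded (Set.range x) ∧
    ∀ xstar : EuclideanSpace ℝ (Fin n),
      (∃ σ : ℕ → ℕ, StrictMono σ ∧ Tendsto (fun t => x (σ t)) atTop (𝓝 xstar)) →
      (∃ ε > 0, ∃ g : EuclideanSpace ℝ (Fin m) → EuclideanSpace ℝ (Fin m), ∃ K : NNReal,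
        (∀ y ∈ Metric.ball (A xstar) ε,
          HasGradientAt (fun z => Metric.infDist z D ^ 2 / 2) (g y) y) ∧
        ContinuousOn g (Metric.ball (A xstar) ε) ∧
        LipschitzOnWith K g (Metric.ball (A xstar) ε)) →
      ∃ xl, Tendsto x atTop (𝓝 xl) := by
  classical
  set φ : EuclideanSpace ℝ (Fin n) → ℝ := phiF A D with hφ
  have hφc : Continuous φ := by
    have : Continuous fun x => Metric.infDist (A x) D ^ 2 / 2 :=
      (((continuous_infDist_pt D).comp A.continuous).pow 2).div_const 2
    exact this
  have hφeq : ∀ y, φ y = Metric.infDist (A y) D ^ 2 / 2 := fun y => rfl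
  have hdec : ∀ t, φ (x (t+1)) + (c/2) * ‖x (t+1) - x t‖^2 ≤ φ (x t) := by
    intro t
    obtain ⟨η, hη, Lb, h1, h2, h3, h4⟩ := hstep t
    rw [hφeq, hφeq]; linarith
  have hanti : Antitone (fun t => φ (x t)) :=
    antitone_nat_of_succ_le (fun t => by nlinarith [hdec t, sq_nonneg ‖x (t+1) - x t‖, hc])
  have hφnn : ∀ y, 0 ≤ φ y := fun y => by
    rw [hφeq]; positivity
  constructor
  · -- Part 1: boundedness
    apply Bornology.IsBounded.subset
      (aux_bounded A C D hDne hDcl hhor (Metric.infDist (A (x 0)) D))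
    rintro _ ⟨t, rfl⟩
    refine ⟨hxC t, ?_⟩
    have h1 : φ (x t) ≤ φ (x 0) := hanti (Nat.zero_le t)
    rw [hφeq, hφeq] at h1
    have h2 : Metric.infDist (A (x t)) D ^ 2 ≤ Metric.infDist (A (x 0)) D ^ 2 := by linarith
    have := Real.sqrt_le_sqrt h2
    rwa [Real.sqrt_sq Metric.infDist_nonneg, Real.sqrt_sq Metric.infDist_nonneg] at this
  · -- Part 2: convergence
    rintro xstar ⟨σ, hσ, hσconv⟩ ⟨ε, hε, g, K, hgrad, hgcont, hglip⟩
    have hbdd : BddBelow (Set.range fun t => φ (x t)) := by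
      refine ⟨0, ?_⟩; rintro _ ⟨t, rfl⟩; exact hφnn _
    set Fstar : ℝ := ⨅ t, φ (x t) with hFstar
    have htend : Tendsto (fun t => φ (x t)) atTop (𝓝 Fstar) := tendsto_atTop_ciInf hanti hbdd
    have hFxstar : φ xstar = Fstar :=
      tendsto_nhds_unique ((hφc.tendsto xstar).comp hσconv) (htend.comp hσ.tendsto_atTop)
    have hFle : ∀ t, Fstar ≤ φ (x t) := fun t => ciInf_le hbdd t
    have htends : Tendsto (fun t => φ (x (t + 1))) atTop (𝓝 Fstar) :=
      (tendsto_add_atTop_iff_nat 1).mpr htend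
    have hΔsq0 : Tendsto (fun t => ‖x (t+1) - x t‖^2) atTop (𝓝 0) := by
      apply squeeze_zero (fun t => sq_nonneg _)
        (g := fun t => (2/c) * (φ (x t) - φ (x (t+1))))
      · intro t
        have h2 := hdec t
        have h3 : (c/2) * ‖x (t+1) - x t‖^2 ≤ φ (x t) - φ (x (t+1)) := by linarith
        have h4 := mul_le_mul_of_nonneg_left h3 (le_of_lt (by positivity : (0:ℝ) < 2/c))
        calc ‖x (t+1) - x t‖^2 = (2/c) * ((c/2) * ‖x (t+1) - x t‖^2) := by
              field_simp
          _ ≤ (2/c) * (φ (x t) - φ (x (t+1))) := h4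
      · have := (htend.sub htends).const_mul (2/c)
        simpa using this
    have hΔ0 : Tendsto (fun t => ‖x (t+1) - x t‖) atTop (𝓝 0) := by
      have h1 : Tendsto (fun t => Real.sqrt (‖x (t+1) - x t‖^2)) atTop (𝓝 (Real.sqrt 0)) :=
        (Real.continuous_sqrt.tendsto 0).comp hΔsq0
      rw [Real.sqrt_zero] at h1
      refine h1.congr (fun t => ?_)
      rw [Real.sqrt_sq (norm_nonneg _)]
    by_cases hcase : ∃ T, φ (x T) ≤ Fstar
    · -- eventually constant
      obtain ⟨T, hT⟩ := hcase
      have hconst : ∀ j, x (T + j) = x T := by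
        intro j
        induction j with
        | zero => rfl
        | succ j ih =>
          have e1 : φ (x (T + j)) = Fstar := le_antisymm ((hanti (Nat.le_add_right T j)).trans hT) (hFle _)
          have e2 : Fstar ≤ φ (x (T + j + 1)) := hFle _
          have e3 := hdec (T + j)
          have e4 : ‖x (T + j + 1) - x (T + j)‖^2 ≤ 0 := by nlinarith
          have e5 : x (T + j + 1) - x (T + j) = 0 := by
            rw [← norm_le_zero_iff]
            nlinarith [norm_nonneg (x (T + j + 1) - x (T + j))]
          have : x (T + j + 1) = x (T + j) := by
            rw [sub_eq_zero] at e5; exact e5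
          rw [show T + (j+1) = T + j + 1 from rfl, this, ih]
      refine ⟨x T, ?_⟩
      apply Tendsto.congr' _ (tendsto_const_nhds (x := x T))
      filter_upwards [eventually_ge_atTop T] with t ht
      obtain ⟨j, rfl⟩ := Nat.exists_eq_add_of_le ht
      exact (hconst j).symm
    · push_neg at hcase
      have hpos : ∀ t, Fstar < φ (x t) := hcase
      set b : ℝ := ‖ContinuousLinearMap.adjoint A‖ * (K : ℝ) * ‖A‖ + Lmax with hbdef
      have hb : 0 < b :=
        add_pos_of_nonneg_of_pos (by positivity) (lt_of_lt_of_le hLmin hLmm)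
      have hW : ∀ τ : ℕ, A (x τ) ∈ Metric.ball (A xstar) ε →
          A (x (τ+1)) ∈ Metric.ball (A xstar) ε →
          ∃ w ∈ regSubdiff φ C (x (τ+1)), ‖w‖ ≤ b * ‖x (τ+1) - x τ‖ := by
        intro τ hb1 hb2
        obtain ⟨η, hη, Lb, hLb1, hLb2, hproj, _⟩ := hstep τ
        have hLbpos : 0 < Lb := lt_of_lt_of_le hLmin hLb1
        have hg2 : HasGradientAt (fun yy => Metric.infDist yy D ^ 2 / 2)
            (g (A (x (τ+1)))) (A (x (τ+1))) := hgrad _ hb2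
        have hgφ : HasGradientAt φ
            ((ContinuousLinearMap.adjoint A) (g (A (x (τ+1))))) (x (τ+1)) := aux_chain A hg2
        have hmem := aux_reg_mem hLbpos hproj hgφ
        refine ⟨_, hmem, ?_⟩
        have hgx : g (A (x τ)) = A (x τ) - η := aux_grad_proj (hgrad _ hb1) hη
        have hrw : (ContinuousLinearMap.adjoint A) (g (A (x (τ+1)))) +
            Lb • (x τ - Lb⁻¹ • (ContinuousLinearMap.adjoint A) (A (x τ) - η) - x (τ+1))
            = (ContinuousLinearMap.adjoint A) (g (A (x (τ+1))) - g (A (x τ)))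
              + Lb • (x τ - x (τ+1)) := by
          rw [hgx]
          have hms : (ContinuousLinearMap.adjoint A) (g (A (x (τ+1))) - (A (x τ) - η)) =
              (ContinuousLinearMap.adjoint A) (g (A (x (τ+1)))) -
              (ContinuousLinearMap.adjoint A) (A (x τ) - η) := map_sub _ _ _
          rw [hms, smul_sub, smul_sub, smul_inv_smul₀ hLbpos.ne', smul_sub]
          abel
        rw [hrw]
        have hlip : ‖g (A (x (τ+1))) - g (A (x τ))‖ ≤ (K:ℝ) * ‖A (x (τ+1)) - A (x τ)‖ := by
          have := hglip.dist_le_mul _ hb2 _ hb1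
          rwa [dist_eq_norm, dist_eq_norm] at this
        have hAn : ‖A (x (τ+1)) - A (x τ)‖ ≤ ‖A‖ * ‖x (τ+1) - x τ‖ := by
          rw [← map_sub]; exact A.le_opNorm _
        have h5 : ‖(ContinuousLinearMap.adjoint A) (g (A (x (τ+1))) - g (A (x τ)))‖ ≤
            ‖ContinuousLinearMap.adjoint A‖ * ‖g (A (x (τ+1))) - g (A (x τ))‖ :=
          (ContinuousLinearMap.adjoint A).le_opNorm _
        have h6 : ‖g (A (x (τ+1))) - g (A (x τ))‖ ≤ (K:ℝ) * (‖A‖ * ‖x (τ+1) - x τ‖) :=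
          hlip.trans (mul_le_mul_of_nonneg_left hAn K.coe_nonneg)
        have h7 : ‖(ContinuousLinearMap.adjoint A) (g (A (x (τ+1))) - g (A (x τ)))‖ ≤
            ‖ContinuousLinearMap.adjoint A‖ * ((K:ℝ) * (‖A‖ * ‖x (τ+1) - x τ‖)) :=
          h5.trans (mul_le_mul_of_nonneg_left h6 (norm_nonneg _))
        have h8 : ‖Lb • (x τ - x (τ+1))‖ = Lb * ‖x (τ+1) - x τ‖ := by
          rw [norm_smul, Real.norm_eq_abs, abs_of_pos hLbpos, norm_sub_rev]
        have h9 := norm_add_le ((ContinuousLinearMap.adjoint A) (g (A (x (τ+1))) - g (A (x τ))))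
          (Lb • (x τ - x (τ+1)))
        have h10 : Lb * ‖x (τ+1) - x τ‖ ≤ Lmax * ‖x (τ+1) - x τ‖ :=
          mul_le_mul_of_nonneg_right hLb2 (norm_nonneg _)
        rw [hbdef]
        nlinarith [h7, h8, h9, h10]
      have hxstarC : xstar ∈ C :=
        hCcl.mem_of_tendsto hσconv (Filter.Eventually.of_forall fun k => hxC _)
      have hΔσ : Tendsto (fun k => x (σ k + 1) - x (σ k)) atTop (𝓝 0) := by
        rw [tendsto_zero_iff_norm_tendsto_zero]
        exact hΔ0.comp hσ.tendsto_atTop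
      have hx1conv : Tendsto (fun k => x (σ k + 1)) atTop (𝓝 xstar) := by
        have := hσconv.add hΔσ
        simp only [add_zero] at this
        refine this.congr (fun k => ?_)
        abel
      have hA1 : Tendsto (fun k => A (x (σ k))) atTop (𝓝 (A xstar)) :=
        (A.continuous.tendsto _).comp hσconv
      have hA2 : Tendsto (fun k => A (x (σ k + 1))) atTop (𝓝 (A xstar)) :=
        (A.continuous.tendsto _).comp hx1conv
      have hballev : ∀ᶠ k in atTop, A (x (σ k)) ∈ Metric.ball (A xstar) ε ∧
          A (x (σ k + 1)) ∈ Metric.ball (A xstar) ε :=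
        by
          have hev1 : ∀ᶠ k in atTop, A (x (σ k)) ∈ Metric.ball (A xstar) ε :=
            hA1 (Metric.ball_mem_nhds _ hε)
          have hev2 : ∀ᶠ k in atTop, A (x (σ k + 1)) ∈ Metric.ball (A xstar) ε :=
            hA2 (Metric.ball_mem_nhds _ hε)
          exact hev1.and hev2
      obtain ⟨N, hN⟩ := eventually_atTop.mp hballev
      have hws : ∀ k : ℕ, ∃ w ∈ regSubdiff φ C (x (σ (k+N) + 1)),
          ‖w‖ ≤ b * ‖x (σ (k+N) + 1) - x (σ (k+N))‖ :=
        fun k => hW (σ (k+N)) (hN (k+N) (Nat.le_add_left N k)).1 (hN (k+N) (Nat.le_add_left N k)).2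
      choose w hw1 hw2 using hws
      have hxsconv : Tendsto (fun k => x (σ (k+N) + 1)) atTop (𝓝 xstar) :=
        hx1conv.comp (tendsto_add_atTop_nat N)
      have hw0 : Tendsto w atTop (𝓝 0) := by
        apply squeeze_zero_norm hw2
        have h1 : Tendsto (fun k => ‖x (σ (k+N) + 1) - x (σ (k+N))‖) atTop (𝓝 0) :=
          (hΔ0.comp hσ.tendsto_atTop).comp (tendsto_add_atTop_nat N)
        have := h1.const_mul b
        simpa using this
      have hlimne : (limSubdiff φ C xstar).Nonempty :=
        ⟨0, hxstarC, (fun k => x (σ (k+N) + 1)), w, hw1, hxsconv,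
          (hφc.tendsto xstar).comp hxsconv, hw0⟩
      obtain ⟨U, s, ψ, ψ', hU, hs, hψ0, hψcont, hψconc, hψnn, hψd, hψ'cont, hψ'pos, hKLi⟩ :=
        hKL xstar hlimne
      obtain ⟨ρ₁, hρ₁, hball₁⟩ := Metric.mem_nhds_iff.mp hU
      set ρ : ℝ := min (ρ₁/2) (ε/(‖A‖+1)) with hρdef
      have hρ : 0 < ρ := lt_min (by linarith) (by positivity)
      have hregionU : ∀ xx, ‖xx - xstar‖ ≤ ρ → xx ∈ U := by
        intro xx hxx; apply hball₁; rw [Metric.mem_ball, dist_eq_norm]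
        exact lt_of_le_of_lt (hxx.trans (min_le_left _ _)) (by linarith)
      have hregionA : ∀ xx, ‖xx - xstar‖ ≤ ρ → A xx ∈ Metric.ball (A xstar) ε := by
        intro xx hxx; rw [Metric.mem_ball, dist_eq_norm, ← map_sub]
        have h0 : (0:ℝ) < ‖A‖ + 1 := by positivity
        calc ‖A (xx - xstar)‖ ≤ ‖A‖ * ‖xx - xstar‖ := A.le_opNorm _
          _ ≤ ‖A‖ * (ε/(‖A‖+1)) :=
              mul_le_mul_of_nonneg_left (hxx.trans (min_le_right _ _)) (norm_nonneg _)
          _ < ε := by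
              rw [show ‖A‖ * (ε/(‖A‖+1)) = ‖A‖ * ε / (‖A‖+1) by ring, div_lt_iff₀ h0]
              nlinarith [norm_nonneg A, hε]
      have key : ∀ τ : ℕ, ‖x τ - xstar‖ ≤ ρ → ‖x (τ+1) - xstar‖ ≤ ρ →
          φ (x (τ+1)) - Fstar < s →
          ψ (φ (x (τ+2)) - Fstar) ≤ ψ (φ (x (τ+1)) - Fstar) ∧
          ‖x (τ+2) - x (τ+1)‖ ≤ ‖x (τ+1) - x τ‖/2 +
            (b/c) * (ψ (φ (x (τ+1)) - Fstar) - ψ (φ (x (τ+2)) - Fstar)) := by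
        intro τ h1 h2 hrs
        obtain ⟨w0, hwmem, hwle⟩ := hW τ (hregionA _ h1) (hregionA _ h2)
        have hr1pos : 0 < φ (x (τ+1)) - Fstar := sub_pos.mpr (hpos _)
        have hr2pos : 0 < φ (x (τ+2)) - Fstar := sub_pos.mpr (hpos _)
        have hr21 : φ (x (τ+2)) ≤ φ (x (τ+1)) := hanti (Nat.le_succ _)
        have hr2s : φ (x (τ+2)) - Fstar < s := by linarith
        have hKL1 : ψ' (φ (x (τ+1)) - φ xstar) * ‖w0‖ ≥ 1 :=
          hKLi (x (τ+1)) (hregionU _ h2) (hxC _)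
            (by rw [hFxstar]; linarith [hpos (τ+1)]) (by rw [hFxstar]; linarith)
            w0 (aux_reg_le_lim hwmem)
        rw [hFxstar] at hKL1
        have hmem1 : φ (x (τ+1)) - Fstar ∈ Set.Ioo (0:ℝ) s := ⟨hr1pos, hrs⟩
        have hψ'1 : 0 < ψ' (φ (x (τ+1)) - Fstar) := hψ'pos _ hmem1
        have htan := aux_tangent hψconc hmem1 (hψd _ hmem1)
          (φ (x (τ+2)) - Fstar) ⟨hr2pos.le, hr2s⟩
        have hdecτ : (c/2) * ‖x (τ+2) - x (τ+1)‖^2 ≤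
            (φ (x (τ+1)) - Fstar) - (φ (x (τ+2)) - Fstar) := by
          have := hdec (τ+1); linarith
        set r1 := φ (x (τ+1)) - Fstar with hr1def
        set r2 := φ (x (τ+2)) - Fstar with hr2def
        set d0 := ‖x (τ+1) - x τ‖ with hd0def
        set d1 := ‖x (τ+2) - x (τ+1)‖ with hd1def
        have hP : ψ' r1 * (r1 - r2) ≤ ψ r1 - ψ r2 := by nlinarith [htan]
        have hPnn : 0 ≤ ψ r1 - ψ r2 := le_trans (mul_nonneg hψ'1.le (by linarith)) hP
        refine ⟨by linarith, ?_⟩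
        have h6 : 1 ≤ ψ' r1 * (b * d0) :=
          le_trans hKL1 (mul_le_mul_of_nonneg_left hwle hψ'1.le)
        have h7 : d1^2 ≤ (2*(b/c)) * (ψ r1 - ψ r2) * d0 := by
          have e1 : r1 - r2 ≤ (r1 - r2) * (ψ' r1 * (b * d0)) :=
            le_mul_of_one_le_right (by linarith) h6
          have e2 : (r1 - r2) * (ψ' r1 * (b*d0)) = (ψ' r1 * (r1 - r2)) * (b*d0) := by ring
          have e3 : (ψ' r1 * (r1 - r2)) * (b*d0) ≤ (ψ r1 - ψ r2)*(b*d0) :=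
            mul_le_mul_of_nonneg_right hP (mul_nonneg hb.le (norm_nonneg _))
          have e4 : d1^2 ≤ (2/c)*(r1 - r2) := by
            have e5 := mul_le_mul_of_nonneg_left hdecτ (le_of_lt (by positivity : (0:ℝ) < 2/c))
            calc d1^2 = (2/c)*((c/2)*d1^2) := by field_simp
              _ ≤ (2/c)*(r1 - r2) := e5
          calc d1^2 ≤ (2/c)*(r1-r2) := e4
            _ ≤ (2/c)*((ψ r1 - ψ r2)*(b*d0)) :=
                mul_le_mul_of_nonneg_left (e1.trans (e2 ▸ e3)) (by positivity)
            _ = (2*(b/c))*(ψ r1 - ψ r2)*d0 := by ring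
        have h8 : d1^2 ≤ (d0/2 + (b/c)*(ψ r1 - ψ r2))^2 := by
          have e1 : (d0/2 + (b/c)*(ψ r1 - ψ r2))^2 =
              d0^2/4 + d0*(b/c*(ψ r1 - ψ r2)) + (b/c*(ψ r1 - ψ r2))^2 := by ring
          have e2 : (d0/2 - (b/c)*(ψ r1 - ψ r2))^2 =
              d0^2/4 - d0*(b/c*(ψ r1 - ψ r2)) + (b/c*(ψ r1 - ψ r2))^2 := by ring
          have e3 : (2*(b/c))*(ψ r1 - ψ r2)*d0 = 2*(d0*(b/c*(ψ r1 - ψ r2))) := by ring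
          rw [e1]; rw [e3] at h7
          linarith [sq_nonneg (d0/2 - (b/c)*(ψ r1 - ψ r2)), e2]
        have h9 := Real.sqrt_le_sqrt h8
        rwa [Real.sqrt_sq (norm_nonneg _), Real.sqrt_sq
          (add_nonneg (by positivity) (mul_nonneg (by positivity) hPnn))] at h9
      -- tendsto facts for choosing t₀
      have hrtend : Tendsto (fun t => φ (x t) - Fstar) atTop (𝓝 0) := by
        have := htend.sub_const Fstar; simpa using this
      have hevs : ∀ᶠ t in atTop, φ (x t) - Fstar < s :=
        hrtend.eventually_lt_const hs
      have hψr : Tendsto (fun t => ψ (φ (x t) - Fstar)) atTop (𝓝 0) := by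
        have hcw : ContinuousWithinAt ψ (Set.Ico 0 s) 0 := hψcont 0 ⟨le_refl 0, hs⟩
        have hmemev : ∀ᶠ t in atTop, φ (x t) - Fstar ∈ Set.Ico 0 s := by
          filter_upwards [hevs] with t ht
          exact ⟨sub_nonneg.mpr (hFle t), ht⟩
        have hwithin : Tendsto (fun t => φ (x t) - Fstar) atTop (𝓝[Set.Ico 0 s] 0) :=
          tendsto_nhdsWithin_iff.mpr ⟨hrtend, hmemev⟩
        have h2 := Tendsto.comp hcw hwithin
        rwa [hψ0] at h2
      have hevψ : ∀ᶠ t in atTop, (2*(b/c)) * ψ (φ (x t) - Fstar) ≤ ρ/4 := by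
        have hm : Tendsto (fun t => (2*(b/c)) * ψ (φ (x t) - Fstar)) atTop (𝓝 0) := by
          simpa using hψr.const_mul (2*(b/c))
        have := hm.eventually_lt_const (by positivity : (0:ℝ) < ρ/4)
        filter_upwards [this] with t ht using ht.le
      have hevΔ : ∀ᶠ t in atTop, ‖x (t+1) - x t‖ ≤ ρ/8 := by
        have := hΔ0.eventually_lt_const (by positivity : (0:ℝ) < ρ/8)
        filter_upwards [this] with t ht using ht.le
      obtain ⟨N₁, hN₁⟩ := eventually_atTop.mp (hevs.and (hevψ.and hevΔ))
      obtain ⟨K₁, hK₁⟩ := Metric.tendsto_atTop.mp hσconv (ρ/8) (by positivity)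
      set t₀ : ℕ := σ (max K₁ N₁) with ht₀def
      have ht₀N : N₁ ≤ t₀ := le_trans (le_max_right _ _) hσ.le_apply
      have H1 : ‖x t₀ - xstar‖ ≤ ρ/8 := by
        have h := hK₁ (max K₁ N₁) (le_max_left _ _)
        rw [dist_eq_norm, ← ht₀def] at h
        exact h.le
      have H3 : ‖x (t₀+1) - x t₀‖ ≤ ρ/8 := (hN₁ t₀ ht₀N).2.2
      have H4 : (2*(b/c)) * ψ (φ (x (t₀+1)) - Fstar) ≤ ρ/4 := (hN₁ (t₀+1) (by omega)).2.1
      have H5 : ‖x (t₀+1) - xstar‖ ≤ ρ/4 := by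
        calc ‖x (t₀+1) - xstar‖ = ‖(x (t₀+1) - x t₀) + (x t₀ - xstar)‖ := by
              rw [sub_add_sub_cancel]
          _ ≤ ‖x (t₀+1) - x t₀‖ + ‖x t₀ - xstar‖ := norm_add_le _ _
          _ ≤ ρ/8 + ρ/8 := add_le_add H3 H1
          _ = ρ/4 := by ring
      have hψnn' : ∀ τ, N₁ ≤ τ → 0 ≤ ψ (φ (x τ) - Fstar) := fun τ hτ =>
        hψnn _ ⟨sub_nonneg.mpr (hFle τ), (hN₁ τ hτ).1⟩
      -- the summation lemma
      have sumind : ∀ (T : ℕ),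
          (∀ k, k < T → (ψ (φ (x (t₀+k+2)) - Fstar) ≤ ψ (φ (x (t₀+k+1)) - Fstar) ∧
            ‖x (t₀+k+2) - x (t₀+k+1)‖ ≤ ‖x (t₀+k+1) - x (t₀+k)‖/2 +
              (b/c) * (ψ (φ (x (t₀+k+1)) - Fstar) - ψ (φ (x (t₀+k+2)) - Fstar)))) →
          ∀ k, k ≤ T →
            (∑ j ∈ Finset.range k, ‖x (t₀+j+2) - x (t₀+j+1)‖) + ‖x (t₀+k+1) - x (t₀+k)‖ ≤
              ‖x (t₀+1) - x t₀‖ +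
                (2*(b/c)) * (ψ (φ (x (t₀+1)) - Fstar) - ψ (φ (x (t₀+k+1)) - Fstar)) := by
        intro T hstepk k
        induction k with
        | zero => intro _; simp
        | succ k ihk =>
          intro hkT
          have hW1 := hstepk k (by omega)
          have hprev := ihk (by omega)
          rw [Finset.sum_range_succ]
          simp only [show t₀+(k+1) = t₀+k+1 by omega, show t₀+(k+1)+1 = t₀+k+2 by omega,
            show t₀+k+1+1 = t₀+k+2 by omega]
          linarith [hW1.1, hW1.2, hprev]
      -- main induction : all iterates after t₀ stay near xstar
      have main : ∀ t : ℕ, ∀ j : ℕ, j ≤ t + 1 → ‖x (t₀ + j) - xstar‖ ≤ 3*ρ/4 := by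
        intro t
        induction t with
        | zero =>
          intro j hj
          interval_cases j
          · exact H1.trans (by linarith)
          · exact H5.trans (by linarith)
        | succ t ih =>
          intro j hj
          rcases Nat.lt_or_ge j (t+2) with hlt | hge
          · exact ih j (by omega)
          · have hj2 : j = t + 2 := by omega
            subst hj2
            have hkeyk : ∀ k, k < t + 1 →
                (ψ (φ (x (t₀+k+2)) - Fstar) ≤ ψ (φ (x (t₀+k+1)) - Fstar) ∧
                ‖x (t₀+k+2) - x (t₀+k+1)‖ ≤ ‖x (t₀+k+1) - x (t₀+k)‖/2 +
                  (b/c) * (ψ (φ (x (t₀+k+1)) - Fstar) - ψ (φ (x (t₀+k+2)) - Fstar))) := by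
              intro k hk
              have h1 := (ih k (by omega)).trans (by linarith : 3*ρ/4 ≤ ρ)
              have h2 := (ih (k+1) (by omega)).trans (by linarith : 3*ρ/4 ≤ ρ)
              have h2' : ‖x (t₀+k+1) - xstar‖ ≤ ρ := by
                rw [show t₀+k+1 = t₀+(k+1) by omega]; exact h2
              have h3 : φ (x (t₀+k+1)) - Fstar < s := (hN₁ (t₀+k+1) (by omega)).1
              exact key (t₀+k) h1 h2' h3
            have hsum := sumind (t+1) hkeyk (t+1) le_rfl
            have hp2 : 0 ≤ ψ (φ (x (t₀+(t+1)+1)) - Fstar) := hψnn' _ (by omega)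
            have hSb : (∑ j ∈ Finset.range (t+1), ‖x (t₀+j+2) - x (t₀+j+1)‖) ≤ ρ/8 + ρ/4 := by
              have e1 : (2*(b/c)) * (ψ (φ (x (t₀+1)) - Fstar) - ψ (φ (x (t₀+(t+1)+1)) - Fstar)) ≤
                  (2*(b/c)) * ψ (φ (x (t₀+1)) - Fstar) := by
                have : (0:ℝ) ≤ 2*(b/c) := by positivity
                nlinarith [hp2]
              linarith [hsum, norm_nonneg (x (t₀+(t+1)+1) - x (t₀+(t+1))), H3, H4, e1]
            have hdist := dist_le_range_sum_dist (fun j => x (t₀+1+j)) (t+1)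
            have hdeq : (∑ j ∈ Finset.range (t+1), dist (x (t₀+1+j)) (x (t₀+1+(j+1)))) =
                ∑ j ∈ Finset.range (t+1), ‖x (t₀+j+2) - x (t₀+j+1)‖ := by
              refine Finset.sum_congr rfl (fun j _ => ?_)
              rw [show t₀+1+j = t₀+j+1 by omega, show t₀+1+(j+1) = t₀+j+2 by omega,
                dist_eq_norm']
            rw [hdeq] at hdist
            calc ‖x (t₀+(t+2)) - xstar‖
                = ‖(x (t₀+(t+2)) - x (t₀+1)) + (x (t₀+1) - xstar)‖ := by
                  rw [sub_add_sub_cancel]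
              _ ≤ ‖x (t₀+(t+2)) - x (t₀+1)‖ + ‖x (t₀+1) - xstar‖ := norm_add_le _ _
              _ ≤ (ρ/8 + ρ/4) + ρ/4 := by
                  refine add_le_add ?_ H5
                  have : ‖x (t₀+(t+2)) - x (t₀+1)‖ = dist (x (t₀+1+0)) (x (t₀+1+(t+1))) := by
                    rw [dist_eq_norm', show t₀+1+0 = t₀+1 by omega,
                      show t₀+1+(t+1) = t₀+(t+2) by omega]
                  rw [this]
                  exact hdist.trans hSb
              _ ≤ 3*ρ/4 := by linarith
      -- conclude: summability and convergence
      have mainall : ∀ j : ℕ, ‖x (t₀ + j) - xstar‖ ≤ 3*ρ/4 := fun j => main j j (by omega)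
      have hkeyall : ∀ k : ℕ,
          (ψ (φ (x (t₀+k+2)) - Fstar) ≤ ψ (φ (x (t₀+k+1)) - Fstar) ∧
          ‖x (t₀+k+2) - x (t₀+k+1)‖ ≤ ‖x (t₀+k+1) - x (t₀+k)‖/2 +
            (b/c) * (ψ (φ (x (t₀+k+1)) - Fstar) - ψ (φ (x (t₀+k+2)) - Fstar))) := by
        intro k
        have h1 := (mainall k).trans (by linarith : 3*ρ/4 ≤ ρ)
        have h2' : ‖x (t₀+k+1) - xstar‖ ≤ ρ := by
          rw [show t₀+k+1 = t₀+(k+1) by omega]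
          exact (mainall (k+1)).trans (by linarith : 3*ρ/4 ≤ ρ)
        exact key (t₀+k) h1 h2' ((hN₁ (t₀+k+1) (by omega)).1)
      have hsummable : Summable (fun j => ‖x (t₀+j+2) - x (t₀+j+1)‖) := by
        apply summable_of_sum_range_le (c := ‖x (t₀+1) - x t₀‖ +
          (2*(b/c)) * ψ (φ (x (t₀+1)) - Fstar)) (fun j => norm_nonneg _)
        intro k
        have hsum := sumind k (fun j hj => hkeyall j) k le_rfl
        have hp2 : 0 ≤ ψ (φ (x (t₀+k+1)) - Fstar) := hψnn' _ (by omega)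
        have hbc : (0:ℝ) ≤ 2*(b/c) := by positivity
        nlinarith [hsum, norm_nonneg (x (t₀+k+1) - x (t₀+k)), hp2]
      have hdistsum : Summable (fun j => dist (x (j + (t₀+1))) (x (j+1 + (t₀+1)))) := by
        apply hsummable.congr
        intro j
        rw [show j + (t₀+1) = t₀+j+1 by omega, show j+1 + (t₀+1) = t₀+j+2 by omega,
          dist_eq_norm']
      have hcauchy : CauchySeq (fun j => x (j + (t₀+1))) := cauchySeq_of_summable_dist hdistsum
      obtain ⟨xl, hxl⟩ := cauchySeq_tendsto_of_complete hcauchy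
      exact ⟨xl, (tendsto_add_atTop_iff_nat (t₀+1)).mp hxl⟩
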